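/- arXiv:1208.5376 — 2 statements merged into one kernel-verified Lean document; each statement's English description precedes it below -/
import Mathlib

section
/- Conditional intensity ratio for the Schlather model: with Σ = [[Σ_s,Σ_{sx}],[Σ_{xs},Σ_x]] positive definite, a_x(z) = zᵀΣ_x⁻¹z > 0, λ_x(z) = π^{−(k−1)/2}|Σ_x|^{−1/2} a_x(z)^{−(k+1)/2} Γ((k+1)/2) and λ_{(s,x)}(u,z) defined analogously in dimension m+k, the ratio λ_{(s,x)}(u,z)/λ_x(z) equals the multivariate Student density with k+1 degrees of freedom, location μ = Σ_{sx}Σ_x⁻¹z and scale Σ̃ = (a_x(z)/(k+1))(Σ_s − Σ_{sx}Σ_x⁻¹Σ_{xs}), evaluated at u. -/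
open Matrix Real

lemma schlather_real_aux (m k : ℕ) (a dS dX q : ℝ)
    (ha : 0 < a) (hdS : 0 < dS) (hdX : 0 < dX) (hq : 0 ≤ q) :
    (π ^ (-((m + k : ℝ) - 1) / 2) * (dX * dS) ^ (-(1 : ℝ) / 2)
        * (q + a) ^ (-((m + k : ℝ) + 1) / 2) * Real.Gamma (((m + k : ℝ) + 1) / 2))
      / (π ^ (-((k : ℝ) - 1) / 2) * dX ^ (-(1 : ℝ) / 2)
          * a ^ (-((k : ℝ) + 1) / 2) * Real.Gamma (((k : ℝ) + 1) / 2))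
    = π ^ (-(m : ℝ) / 2) * ((k : ℝ) + 1) ^ (-(m : ℝ) / 2)
        * ((a / ((k : ℝ) + 1)) ^ m * dS) ^ (-(1 : ℝ) / 2)
        * (1 + (a / ((k : ℝ) + 1))⁻¹ * q / ((k : ℝ) + 1)) ^ (-((m : ℝ) + ((k : ℝ) + 1)) / 2)
        * (Real.Gamma (((m : ℝ) + ((k : ℝ) + 1)) / 2) / Real.Gamma (((k : ℝ) + 1) / 2)) := by
  have hπ := Real.pi_pos
  have hK : (0:ℝ) < (k:ℝ) + 1 := by positivity
  have hQ : (0:ℝ) < q + a := by linarith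
  have hbr : 1 + (a / ((k : ℝ) + 1))⁻¹ * q / ((k : ℝ) + 1) = (q + a) / a := by
    field_simp; ring
  have hΓ2 : 0 < Real.Gamma (((k : ℝ) + 1) / 2) := Real.Gamma_pos_of_pos (by positivity)
  have hΓ1 : Real.Gamma (((m + k : ℝ) + 1) / 2) = Real.Gamma (((m : ℝ) + ((k : ℝ) + 1)) / 2) := by
    ring_nf
  rw [hbr, hΓ1]
  rw [Real.rpow_def_of_pos hπ, Real.rpow_def_of_pos hπ, Real.rpow_def_of_pos hπ,
    Real.rpow_def_of_pos (by positivity : (0:ℝ) < dX * dS),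
    Real.rpow_def_of_pos hQ, Real.rpow_def_of_pos hdX, Real.rpow_def_of_pos ha,
    Real.rpow_def_of_pos hK, Real.rpow_def_of_pos (by positivity : (0:ℝ) < (a/((k:ℝ)+1))^m * dS),
    Real.rpow_def_of_pos (by positivity : (0:ℝ) < (q+a)/a)]
  rw [Real.log_mul (by positivity) (by positivity), Real.log_mul (by positivity) hdS.ne',
    Real.log_pow, Real.log_div hQ.ne' ha.ne', Real.log_div ha.ne' hK.ne']
  rw [div_eq_iff (by positivity)]
  simp only [← Real.exp_add]
  rw [mul_mul_mul_comm, ← Real.exp_add, div_mul_cancel₀ _ hΓ2.ne']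
  rw [mul_eq_mul_right_iff]
  left
  rw [Real.exp_eq_exp]
  ring


/-- The ratio of Schlather intensities is the multivariate Student density with
`k + 1` degrees of freedom, location `Σ_{sx} Σ_x⁻¹ z` and scale
`(a_x(z)/(k+1)) (Σ_s − Σ_{sx} Σ_x⁻¹ Σ_{xs})`. -/
theorem schlather_conditional_intensity_is_student (m k : ℕ)
    (Ss : Matrix (Fin m) (Fin m) ℝ) (Ssx : Matrix (Fin m) (Fin k) ℝ)
    (Sxs : Matrix (Fin k) (Fin m) ℝ) (Sx : Matrix (Fin k) (Fin k) ℝ)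
    (hsym : (Matrix.fromBlocks Ss Ssx Sxs Sx).IsSymm)
    (hpd : (Matrix.fromBlocks Ss Ssx Sxs Sx).PosDef)
    (u : Fin m → ℝ) (z : Fin k → ℝ) (ha : 0 < z ⬝ᵥ Sx⁻¹ *ᵥ z) :
    (π ^ (-((m + k : ℝ) - 1) / 2) * (Matrix.fromBlocks Ss Ssx Sxs Sx).det ^ (-(1 : ℝ) / 2)
        * (Sum.elim u z ⬝ᵥ (Matrix.fromBlocks Ss Ssx Sxs Sx)⁻¹ *ᵥ Sum.elim u z)
            ^ (-((m + k : ℝ) + 1) / 2)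
        * Real.Gamma (((m + k : ℝ) + 1) / 2))
      / (π ^ (-((k : ℝ) - 1) / 2) * Sx.det ^ (-(1 : ℝ) / 2)
          * (z ⬝ᵥ Sx⁻¹ *ᵥ z) ^ (-((k : ℝ) + 1) / 2) * Real.Gamma (((k : ℝ) + 1) / 2))
    = π ^ (-(m : ℝ) / 2) * ((k : ℝ) + 1) ^ (-(m : ℝ) / 2)
        * (((z ⬝ᵥ Sx⁻¹ *ᵥ z) / ((k : ℝ) + 1)) • (Ss - Ssx * Sx⁻¹ * Sxs)).det ^ (-(1 : ℝ) / 2)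
        * (1 + (u - (Ssx * Sx⁻¹) *ᵥ z) ⬝ᵥ
              (((z ⬝ᵥ Sx⁻¹ *ᵥ z) / ((k : ℝ) + 1)) • (Ss - Ssx * Sx⁻¹ * Sxs))⁻¹ *ᵥ
              (u - (Ssx * Sx⁻¹) *ᵥ z) / ((k : ℝ) + 1)) ^ (-((m : ℝ) + ((k : ℝ) + 1)) / 2)
        * (Real.Gamma (((m : ℝ) + ((k : ℝ) + 1)) / 2) / Real.Gamma (((k : ℝ) + 1) / 2)) := by
  have hsym' := hsym
  rw [Matrix.IsSymm, Matrix.fromBlocks_transpose, Matrix.fromBlocks_inj] at hsym'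
  obtain ⟨hSsT, hSxsT, hSsxT, hSxT⟩ := hsym'
  -- Sx pos def
  have hpdx : Sx.PosDef := by
    refine Matrix.PosDef.of_dotProduct_mulVec_pos (by rw [Matrix.IsHermitian, Matrix.conjTranspose_eq_transpose_of_trivial, hSxT]) ?_
    intro x hx
    have hne : Sum.elim (0 : Fin m → ℝ) x ≠ 0 := by
      intro h; exact hx (funext fun i => congrFun h (Sum.inr i))
    have := hpd.dotProduct_mulVec_pos hne
    simpa [Function.star_sumElim, fromBlocks_mulVec, dotProduct_block] using this
  haveI iSx : Invertible Sx := Sx.invertibleOfIsUnitDet (isUnit_iff_ne_zero.mpr hpdx.det_pos.ne')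
  haveI iT : Invertible (Matrix.fromBlocks Ss Ssx Sxs Sx) :=
    (Matrix.fromBlocks Ss Ssx Sxs Sx).invertibleOfIsUnitDet
      (isUnit_iff_ne_zero.mpr hpd.det_pos.ne')
  haveI iS' : Invertible (Ss - Ssx * ⅟Sx * Sxs) :=
    Matrix.invertibleOfFromBlocks₂₂Invertible Ss Ssx Sxs Sx
  have hSchur : Ss - Ssx * ⅟Sx * Sxs = Ss - Ssx * Sx⁻¹ * Sxs := by
    rw [invOf_eq_nonsing_inv]
  haveI iS : Invertible (Ss - Ssx * Sx⁻¹ * Sxs) := hSchur ▸ iS'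
  set S : Matrix (Fin m) (Fin m) ℝ := Ss - Ssx * Sx⁻¹ * Sxs with hS
  -- determinant identity
  have hdet : (Matrix.fromBlocks Ss Ssx Sxs Sx).det = Sx.det * S.det := by
    rw [Matrix.det_fromBlocks₂₂, ← hSchur]
  -- the block inverse
  have hinv : (Matrix.fromBlocks Ss Ssx Sxs Sx)⁻¹ =
      Matrix.fromBlocks S⁻¹ (-(S⁻¹ * Ssx * Sx⁻¹)) (-(Sx⁻¹ * Sxs * S⁻¹))
        (Sx⁻¹ + Sx⁻¹ * Sxs * S⁻¹ * Ssx * Sx⁻¹) := by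
    have h0 := Matrix.invOf_fromBlocks₂₂_eq Ss Ssx Sxs Sx
    rw [invOf_eq_nonsing_inv (Matrix.fromBlocks Ss Ssx Sxs Sx)] at h0
    rw [h0]
    simp only [invOf_eq_nonsing_inv, hS]
  -- symmetry of Schur complement
  have hu : IsUnit S.det := isUnit_iff_ne_zero.mpr (by
    have h1 := hpd.det_pos
    rw [hdet] at h1
    have h2 := hpdx.det_pos
    intro h; rw [h] at h1; simp at h1)
  have hST : Sᵀ = S := by
    simp only [hS, Matrix.transpose_sub, Matrix.transpose_mul, Matrix.transpose_nonsing_inv,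
      hSsT, hSxsT, hSsxT, hSxT, Matrix.mul_assoc]
  have hSHerm : S.IsHermitian := by
    rw [Matrix.IsHermitian, Matrix.conjTranspose_eq_transpose_of_trivial, hST]
  have hSinvHerm : (S⁻¹).IsHermitian := hSHerm.inv
  haveI iSinv : Invertible S⁻¹ := by
    rw [← invOf_eq_nonsing_inv]; exact invertibleInvOf
  have hC : (-(S⁻¹ * Ssx * Sx⁻¹))ᴴ = -(Sx⁻¹ * Sxs * S⁻¹) := by
    rw [Matrix.conjTranspose_eq_transpose_of_trivial]
    simp only [Matrix.transpose_neg, Matrix.transpose_mul, Matrix.transpose_nonsing_inv,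
      hSsxT, hSxT, hST, Matrix.mul_assoc]
  set μ : Fin m → ℝ := (Ssx * Sx⁻¹) *ᵥ z with hμ
  have hAB : (S⁻¹)⁻¹ * (-(S⁻¹ * Ssx * Sx⁻¹)) = -(Ssx * Sx⁻¹) := by
    rw [Matrix.nonsing_inv_nonsing_inv _ hu, Matrix.mul_neg]
    rw [show S * (S⁻¹ * Ssx * Sx⁻¹) = (S * S⁻¹) * (Ssx * Sx⁻¹) by
      simp only [Matrix.mul_assoc]]
    rw [Matrix.mul_nonsing_inv _ hu, Matrix.one_mul]
  have hDB : (Sx⁻¹ + Sx⁻¹ * Sxs * S⁻¹ * Ssx * Sx⁻¹)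
      - (-(S⁻¹ * Ssx * Sx⁻¹))ᴴ * (S⁻¹)⁻¹ * (-(S⁻¹ * Ssx * Sx⁻¹)) = Sx⁻¹ := by
    rw [hC, Matrix.nonsing_inv_nonsing_inv _ hu]
    rw [show -(Sx⁻¹ * Sxs * S⁻¹) * S * -(S⁻¹ * Ssx * Sx⁻¹)
        = Sx⁻¹ * (Sxs * (S⁻¹ * (S * (S⁻¹ * (Ssx * Sx⁻¹))))) by
      simp only [Matrix.neg_mul, Matrix.mul_neg, neg_neg, Matrix.mul_assoc]]
    rw [Matrix.mul_nonsing_inv_cancel_left _ _ hu]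
    rw [show Sx⁻¹ + Sx⁻¹ * Sxs * S⁻¹ * Ssx * Sx⁻¹
        = Sx⁻¹ + Sx⁻¹ * (Sxs * (S⁻¹ * (Ssx * Sx⁻¹))) by simp only [Matrix.mul_assoc]]
    exact add_sub_cancel_right _ _
  -- the key quadratic decomposition
  have hquad : Sum.elim u z ⬝ᵥ (Matrix.fromBlocks Ss Ssx Sxs Sx)⁻¹ *ᵥ Sum.elim u z
      = (u - μ) ⬝ᵥ S⁻¹ *ᵥ (u - μ) + z ⬝ᵥ Sx⁻¹ *ᵥ z := by
    have h := Matrix.schur_complement_eq₁₁ (A := S⁻¹) (-(S⁻¹ * Ssx * Sx⁻¹))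
      (Sx⁻¹ + Sx⁻¹ * Sxs * S⁻¹ * Ssx * Sx⁻¹) u z hSinvHerm
    rw [hAB, hDB] at h
    simp only [star_trivial] at h
    rw [hinv, ← hC, Matrix.dotProduct_mulVec, h, ← Matrix.dotProduct_mulVec,
      ← Matrix.dotProduct_mulVec, Matrix.neg_mulVec, ← hμ, ← sub_eq_add_neg]
  -- q is nonnegative
  have hq : 0 ≤ (u - μ) ⬝ᵥ S⁻¹ *ᵥ (u - μ) := by
    have hps : ((Matrix.fromBlocks Ss Ssx Sxs Sx)⁻¹.submatrix Sum.inl Sum.inl).PosSemidef :=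
      hpd.inv.posSemidef.submatrix Sum.inl
    rw [hinv] at hps
    have hsub : (Matrix.fromBlocks S⁻¹ (-(S⁻¹ * Ssx * Sx⁻¹)) (-(Sx⁻¹ * Sxs * S⁻¹))
        (Sx⁻¹ + Sx⁻¹ * Sxs * S⁻¹ * Ssx * Sx⁻¹)).submatrix Sum.inl Sum.inl = S⁻¹ := by
      ext i j; simp [Matrix.submatrix_apply]
    rw [hsub] at hps
    simpa using hps.dotProduct_mulVec_nonneg (u - μ)
  have hdS : 0 < S.det := by
    have h1 := hpd.det_pos
    rw [hdet] at h1
    have h2 := hpdx.det_pos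
    nlinarith
  -- scaled matrix facts
  have hK : (0:ℝ) < (k:ℝ) + 1 := by positivity
  set c : ℝ := (z ⬝ᵥ Sx⁻¹ *ᵥ z) / ((k:ℝ) + 1) with hc
  have hcpos : 0 < c := by positivity
  haveI : Invertible c := invertibleOfNonzero hcpos.ne'
  have hsmulinv : (c • S)⁻¹ = c⁻¹ • S⁻¹ := by
    rw [Matrix.inv_smul S c hu, invOf_eq_inv]
  have hdet2 : (c • S).det = c ^ m * S.det := by
    rw [Matrix.det_smul, Fintype.card_fin]
  have hquad2 : (u - μ) ⬝ᵥ (c • S)⁻¹ *ᵥ (u - μ) = c⁻¹ * ((u - μ) ⬝ᵥ S⁻¹ *ᵥ (u - μ)) := by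
    rw [hsmulinv, Matrix.smul_mulVec, dotProduct_smul, smul_eq_mul]
  rw [hdet, hquad, hquad2, hdet2]
  exact schlather_real_aux m k (z ⬝ᵥ Sx⁻¹ *ᵥ z) S.det Sx.det ((u - μ) ⬝ᵥ S⁻¹ *ᵥ (u - μ))
    ha hdS hpdx.det_pos hq
end

section
/- Change of variables for the Brown–Resnick intensity: for a measurable nonnegative function f on ℝ^k (a density) and γ ∈ ℝ^k, ∫₀^∞ ∫_{ℝ^k} 1{(ζ e^{y₁−γ₁},…,ζ e^{y_k−γ_k}) ∈ A} f(y) dy ζ⁻² dζ = ∫_A (∫_ℝ f(log z − r·1 + γ) e^{−r} dr) ∏ᵢ zᵢ⁻¹ dz, for any Borel set A ⊆ (0,∞)^k. -/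
open MeasureTheory Set Real
open scoped ENNReal

lemma br_det_one (c : ℝ) : (ContinuousLinearMap.smulRight (1 : ℝ →L[ℝ] ℝ) c).det = c := by
  have h : (ContinuousLinearMap.smulRight (1 : ℝ →L[ℝ] ℝ) c) = c • (1 : ℝ →L[ℝ] ℝ) := by
    ext x; simp [mul_comm]
  rw [h]
  simp [ContinuousLinearMap.det, LinearMap.det_smul, ContinuousLinearMap.one_def,
    ContinuousLinearMap.coe_id, LinearMap.det_id]

lemma br_det_span (c : ℝ) : (ContinuousLinearMap.toSpanSingleton ℝ c).det = c := by
  have h : ContinuousLinearMap.toSpanSingleton ℝ c = ContinuousLinearMap.smulRight (1 : ℝ →L[ℝ] ℝ) c := by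
    ext; simp
  rw [h, br_det_one]

lemma br_det_pi {k : ℕ} (d : Fin k → ℝ) :
    (ContinuousLinearMap.pi (fun i => d i • ContinuousLinearMap.proj (R := ℝ)
      (φ := fun _ : Fin k => ℝ) i)).det = ∏ i, d i := by
  have h : (ContinuousLinearMap.pi (fun i => d i • ContinuousLinearMap.proj (R := ℝ)
      (φ := fun _ : Fin k => ℝ) i) : (Fin k → ℝ) →ₗ[ℝ] (Fin k → ℝ))
      = Matrix.toLin' (Matrix.diagonal d) := by
    apply LinearMap.ext; intro v
    funext i
    simp [Matrix.toLin'_apply, Matrix.mulVec_diagonal]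
  rw [ContinuousLinearMap.det, h, LinearMap.det_toLin', Matrix.det_diagonal]

/-- Change of variables `z = ζ exp(y − γ)`, `r = log ζ` for the Brown--Resnick
intensity: the Poisson integral of a density `f` transported by
`(ζ, y) ↦ ζ e^{y−γ}` equals the integral over `A` of
`(∫ f(log z − r·1 + γ) e^{−r} dr) ∏ zᵢ⁻¹`. -/
theorem brown_resnick_change_of_variables (k : ℕ)
    (f : (Fin k → ℝ) → ℝ) (hf : Measurable f) (hfnn : ∀ y, 0 ≤ f y)
    (γ : Fin k → ℝ) (A : Set (Fin k → ℝ)) (hA : MeasurableSet A)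
    (hApos : A ⊆ {z | ∀ i, 0 < z i}) :
    ∫⁻ ζ in Ioi (0 : ℝ),
        ∫⁻ y : Fin k → ℝ,
          (A.indicator (fun _ => (1 : ℝ≥0∞)) fun i => ζ * Real.exp (y i - γ i))
            * ENNReal.ofReal (f y) * ENNReal.ofReal (ζ ^ (-2 : ℝ))
      = ∫⁻ z in A,
          (∫⁻ r : ℝ,
              ENNReal.ofReal (f fun i => Real.log (z i) - r + γ i)
                * ENNReal.ofReal (Real.exp (-r)))
            * ENNReal.ofReal (∏ i, (z i)⁻¹) := by
  classical
  set E : (Fin k → ℝ) → (Fin k → ℝ) := fun x i => Real.exp (x i) with hEdef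
  set Φ : ℝ → ℝ≥0∞ := fun s => ∫⁻ y : Fin k → ℝ,
      (A.indicator (fun _ => (1 : ℝ≥0∞)) fun i => Real.exp s * Real.exp (y i - γ i))
        * ENNReal.ofReal (f y) * ENNReal.ofReal (Real.exp (-s)) with hΦdef
  have hEmeas : Measurable E :=
    measurable_pi_lambda _ fun i => Real.measurable_exp.comp (measurable_pi_apply i)
  have hpre : MeasurableSet (E ⁻¹' A) := hEmeas hA
  -- LHS equals ∫⁻ s, Φ s
  have hLHS : (∫⁻ ζ in Ioi (0 : ℝ),
      ∫⁻ y : Fin k → ℝ,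
        (A.indicator (fun _ => (1 : ℝ≥0∞)) fun i => ζ * Real.exp (y i - γ i))
          * ENNReal.ofReal (f y) * ENNReal.ofReal (ζ ^ (-2 : ℝ))) = ∫⁻ s, Φ s := by
    set g : ℝ → ℝ≥0∞ := fun ζ => ∫⁻ y : Fin k → ℝ,
        (A.indicator (fun _ => (1 : ℝ≥0∞)) fun i => ζ * Real.exp (y i - γ i))
          * ENNReal.ofReal (f y) * ENNReal.ofReal (ζ ^ (-2 : ℝ)) with hgdef
    have himg : Real.exp '' (univ : Set ℝ) = Ioi 0 := by
      rw [image_univ, Real.range_exp]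
    have hchg : (∫⁻ ζ in Ioi (0 : ℝ), g ζ) = ∫⁻ s, ENNReal.ofReal (Real.exp s) * g (Real.exp s) := by
      rw [← himg, lintegral_image_eq_lintegral_abs_det_fderiv_mul volume MeasurableSet.univ
        (fun s _ => ((Real.hasDerivAt_exp s).hasFDerivAt.hasFDerivWithinAt))
        (Real.exp_injective.injOn) g, Measure.restrict_univ]
      refine lintegral_congr fun s => ?_
      rw [br_det_span, abs_of_pos (Real.exp_pos s)]
    rw [hchg]
    refine lintegral_congr fun s => ?_
    rw [hgdef]
    simp only []
    rw [← lintegral_const_mul' _ _ ENNReal.ofReal_ne_top]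
    refine lintegral_congr fun y => ?_
    have h2 : (Real.exp s) ^ (-2 : ℝ) = Real.exp (-(2 * s)) := by
      rw [Real.rpow_def_of_pos (Real.exp_pos s), Real.log_exp]; ring_nf
    rw [h2]
    have h3 : ENNReal.ofReal (Real.exp s) *
        ((A.indicator (fun _ => (1 : ℝ≥0∞)) fun i => Real.exp s * Real.exp (y i - γ i))
          * ENNReal.ofReal (f y) * ENNReal.ofReal (Real.exp (-(2 * s))))
        = (A.indicator (fun _ => (1 : ℝ≥0∞)) fun i => Real.exp s * Real.exp (y i - γ i))
          * ENNReal.ofReal (f y)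
          * (ENNReal.ofReal (Real.exp (-(2 * s))) * ENNReal.ofReal (Real.exp s)) := by ring
    rw [h3, ← ENNReal.ofReal_mul (Real.exp_pos _).le, ← Real.exp_add]
    have h6 : -(2 * s) + s = -s := by ring
    rw [h6]
  -- RHS side
  set J : (Fin k → ℝ) → ℝ≥0∞ := fun x => ∫⁻ r : ℝ,
      ENNReal.ofReal (f fun i => x i - r + γ i) * ENNReal.ofReal (Real.exp (-r)) with hJdef
  have hEimg : E '' (E ⁻¹' A) = A := by
    rw [image_preimage_eq_inter_range]
    have hr : range E = {z : Fin k → ℝ | ∀ i, 0 < z i} := by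
      ext z; constructor
      · rintro ⟨x, rfl⟩ i; exact Real.exp_pos _
      · intro hz; exact ⟨fun i => Real.log (z i), funext fun i => Real.exp_log (hz i)⟩
    rw [hr]; exact inter_eq_left.mpr hApos
  have hEinj : InjOn E (E ⁻¹' A) := fun a _ b _ h =>
    funext fun i => Real.exp_injective (congrFun h i)
  have hRHS : (∫⁻ z in A,
      (∫⁻ r : ℝ, ENNReal.ofReal (f fun i => Real.log (z i) - r + γ i)
        * ENNReal.ofReal (Real.exp (-r))) * ENNReal.ofReal (∏ i, (z i)⁻¹))
      = ∫⁻ x in E ⁻¹' A, J x := by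
    have hEderiv : ∀ x ∈ E ⁻¹' A, HasFDerivWithinAt E
        (ContinuousLinearMap.pi (fun i => Real.exp (x i) • ContinuousLinearMap.proj (R := ℝ)
          (φ := fun _ : Fin k => ℝ) i)) (E ⁻¹' A) x := by
      intro x _
      have hi : ∀ i : Fin k, HasFDerivAt (fun x : Fin k → ℝ => Real.exp (x i))
          (Real.exp (x i) • ContinuousLinearMap.proj (R := ℝ) (φ := fun _ : Fin k => ℝ) i) x :=
        fun i => by
          have := (Real.hasDerivAt_exp (x i)).comp_hasFDerivAt x
            ((ContinuousLinearMap.proj (R := ℝ) (φ := fun _ : Fin k => ℝ) i).hasFDerivAt)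
          exact this
      exact (hasFDerivAt_pi.2 hi).hasFDerivWithinAt
    conv_lhs => rw [← hEimg]
    rw [lintegral_image_eq_lintegral_abs_det_fderiv_mul volume hpre hEderiv hEinj]
    refine setLIntegral_congr_fun hpre (fun x _ => ?_)
    rw [br_det_pi]
    have hpos : 0 < ∏ i, Real.exp (x i) := Finset.prod_pos fun i _ => Real.exp_pos _
    rw [abs_of_pos hpos]
    have hlog : (∫⁻ r : ℝ, ENNReal.ofReal (f fun i => Real.log (E x i) - r + γ i)
        * ENNReal.ofReal (Real.exp (-r))) = J x := by
      refine lintegral_congr fun r => ?_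
      simp [hEdef, Real.log_exp]
    rw [hlog]
    have h4 : ENNReal.ofReal (∏ i, Real.exp (x i)) *
        (J x * ENNReal.ofReal (∏ i, (E x i)⁻¹))
        = J x * (ENNReal.ofReal (∏ i, Real.exp (x i)) * ENNReal.ofReal (∏ i, (E x i)⁻¹)) := by
      ring
    rw [h4, ← ENNReal.ofReal_mul hpos.le]
    have h5 : (∏ i, Real.exp (x i)) * ∏ i, (E x i)⁻¹ = 1 := by
      rw [← Finset.prod_mul_distrib]
      simp [hEdef, Real.exp_ne_zero]
    rw [h5, ENNReal.ofReal_one, mul_one]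
  rw [hLHS, hRHS]
  -- now ∫⁻ x in E⁻¹'A, J x = ∫⁻ s, Φ s
  set ψ : (Fin k → ℝ) → ℝ → ℝ≥0∞ := fun x r =>
    (E ⁻¹' A).indicator (fun _ => (1 : ℝ≥0∞)) x *
      (ENNReal.ofReal (f fun i => x i - r + γ i) * ENNReal.ofReal (Real.exp (-r))) with hψdef
  have hind : (∫⁻ x in E ⁻¹' A, J x) = ∫⁻ x, ∫⁻ r, ψ x r := by
    rw [← lintegral_indicator hpre]
    refine lintegral_congr fun x => ?_
    by_cases hx : x ∈ E ⁻¹' A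
    · simp [indicator_of_mem hx, hψdef, hJdef]
    · simp [indicator_of_notMem hx, hψdef]
  rw [hind]
  have hmeasψ : AEMeasurable (Function.uncurry ψ)
      (volume.prod (volume : Measure ℝ)) := by
    refine Measurable.aemeasurable ?_
    apply Measurable.mul
    · exact (measurable_const.indicator hpre).comp measurable_fst
    · refine Measurable.mul (f := fun a : (Fin k → ℝ) × ℝ => ENNReal.ofReal (f fun i => a.1 i - a.2 + γ i))
        (g := fun a : (Fin k → ℝ) × ℝ => ENNReal.ofReal (Real.exp (-a.2))) ?_ ?_
      · refine ENNReal.measurable_ofReal.comp (hf.comp ?_)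
        exact measurable_pi_lambda _ fun i =>
          (((measurable_pi_apply i).comp measurable_fst).sub measurable_snd).add measurable_const
      · exact ENNReal.measurable_ofReal.comp
          (Real.measurable_exp.comp measurable_snd.neg)
  rw [lintegral_lintegral_swap hmeasψ]
  refine lintegral_congr fun r => ?_
  have htrans : (∫⁻ x, ψ x r) = ∫⁻ y, ψ (y + fun i => r - γ i) r :=
    (lintegral_add_right_eq_self (fun x => ψ x r) (fun i => r - γ i)).symm
  rw [htrans, hΦdef]
  refine lintegral_congr fun y => ?_
  have harg : (fun i => (y + fun i => r - γ i) i - r + γ i) = y := by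
    funext i; simp [Pi.add_apply]; ring
  have hindeq : (E ⁻¹' A).indicator (fun _ => (1 : ℝ≥0∞)) (y + fun i => r - γ i)
      = A.indicator (fun _ => (1 : ℝ≥0∞)) fun i => Real.exp r * Real.exp (y i - γ i) := by
    have hEval : E (y + fun i => r - γ i) = fun i => Real.exp r * Real.exp (y i - γ i) := by
      funext i
      simp only [hEdef, Pi.add_apply]
      rw [← Real.exp_add]; ring_nf
    simp [indicator_apply, mem_preimage, hEval]
  simp only [hψdef, harg, hindeq, mul_assoc]
end
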